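/- arXiv:2402.02250 — 3 statements merged into one kernel-verified Lean document; each statement's English description precedes it below -/
import Mathlib

section
/- For every integer n ≥ 1, PL(n), the number of distinct lengths of the words B(λ) as λ ranges over all palindrome partitions of n, equals the number of factorizations 2(n+1) = x·y with 2 ≤ x ≤ y (equivalently, the number of unordered factorizations of 2(n+1) into two factors each at least 2). -/
/-- A partition encoded as its list of parts in weakly decreasing order,
all parts positive. -/
def IsPartition (l : List ℕ) : Prop :=
  List.Pairwise (· ≥ ·) l ∧ ∀ x ∈ l, 0 < x

/-- Auxiliary: given the previous part and the remaining parts (read from the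
smallest part upward), produce the rest of the boundary word. -/
def wordAux : ℕ → List ℕ → List Bool
  | _, [] => []
  | prev, a :: rest => (false :: List.replicate (a - prev) true) ++ wordAux a rest

/-- `partitionWord l` is the word `B(λ)`: trace the southeast boundary of the
Young diagram of `λ` from southwest to northeast, recording `true` for each
horizontal step and `false` for each vertical step, then delete the initial
`true` and the final `false`. -/
def partitionWord (l : List ℕ) : List Bool :=
  match l.reverse with
  | [] => []
  | a :: rest => List.replicate (a - 1) true ++ wordAux a rest

/-- The conjugate (transpose) partition. -/
def conjugate (l : List ℕ) : List ℕ :=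
  (List.range l.headI).map fun j => (l.filter fun x => decide (j < x)).length

/-- `PP n` is the number of palindrome partitions of `n`. -/
noncomputable def PP (n : ℕ) : ℕ :=
  {l : List ℕ | IsPartition l ∧ l.sum = n ∧
    partitionWord l = (partitionWord l).reverse}.ncard

/-- `RCount n` is the number of partitions `λ` of `n` such that the partition
corresponding to the reversed word `B(λ)ʳ` is also a partition of `n`. -/
noncomputable def RCount (n : ℕ) : ℕ :=
  {l : List ℕ | IsPartition l ∧ l.sum = n ∧
    ∃ μ : List ℕ, IsPartition μ ∧ μ.sum = n ∧
      partitionWord μ = (partitionWord l).reverse}.ncard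

/-- `T n k` is the number of nondecreasing sequences of `n` integers in
`[-k, k]` summing to zero. -/
noncomputable def T (n k : ℕ) : ℕ :=
  {f : Fin n → ℤ | (∀ i j : Fin n, i ≤ j → f i ≤ f j) ∧
    (∀ i, -(k : ℤ) ≤ f i ∧ f i ≤ (k : ℤ)) ∧ ∑ i, f i = 0}.ncard

/-- `NRect a b` is the number of partitions of `a*b/2` with at most `a` parts,
each part at most `b`. -/
noncomputable def NRect (a b : ℕ) : ℕ :=
  {μ : Fin a → ℕ | (∀ i j : Fin a, i ≤ j → μ j ≤ μ i) ∧
    (∀ i, μ i ≤ b) ∧ ∑ i, μ i = a * b / 2}.ncard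

/-- number of (true, later false) pairs -/
def winv : List Bool → ℕ
  | [] => 0
  | a :: w => winv w + if a then w.count false else 0

lemma count_add_length (w : List Bool) : w.count true + w.count false = w.length := by
  induction w with
  | nil => simp
  | cons a t ih => cases a <;> simp [List.count_cons] <;> omega

lemma winv_append_singleton (w : List Bool) (a : Bool) :
    winv (w ++ [a]) = winv w + if a then 0 else w.count true := by
  induction w with
  | nil => cases a <;> simp [winv]
  | cons b t ih =>
    cases b <;> cases a <;>
      simp [winv, ih, List.count_append, List.count_cons] <;> omega

lemma winv_reverse (w : List Bool) :
    winv w.reverse + winv w = w.count true * w.count false := by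
  induction w with
  | nil => simp [winv]
  | cons a t ih =>
    rw [List.reverse_cons, winv_append_singleton]
    cases a <;> simp [winv, List.count_cons, List.count_reverse] <;> nlinarith [ih]

lemma winv_replicate_true_append (k : ℕ) (v : List Bool) :
    winv (List.replicate k true ++ v) = winv v + k * v.count false := by
  induction k with
  | zero => simp
  | succ k ih =>
    rw [List.replicate_succ, List.cons_append]
    show winv (List.replicate k true ++ v) +
      (if true then (List.replicate k true ++ v).count false else 0) = _
    simp [ih, List.count_append, List.count_replicate]
    ring

lemma count_false_wordAux (prev : ℕ) (r : List ℕ) :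
    (wordAux prev r).count false = r.length := by
  induction r generalizing prev with
  | nil => simp [wordAux]
  | cons a rest ih => simp [wordAux, List.count_cons, List.count_append, ih, List.count_replicate]

lemma count_true_wordAux (prev : ℕ) (r : List ℕ) (h : List.Chain (· ≤ ·) prev r) :
    (wordAux prev r).count true + prev = r.getLastD prev := by
  induction r generalizing prev with
  | nil => simp [wordAux]
  | cons a rest ih =>
    simp only [List.Chain, List.isChain_cons_cons] at h
    have h1 : prev ≤ a := h.1
    have IH := ih a h.2
    rw [List.getLastD_cons]
    have e : (wordAux prev (a :: rest)).count true =
        (a - prev) + (wordAux a rest).count true := by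
      simp [wordAux, List.count_cons, List.count_append]
    omega

lemma winv_wordAux (prev : ℕ) (r : List ℕ) (h : List.Chain (· ≤ ·) prev r) :
    winv (wordAux prev r) + r.length * prev + r.getLastD prev = r.sum + prev := by
  induction r generalizing prev with
  | nil => simp [wordAux, winv]
  | cons a rest ih =>
    simp only [List.Chain, List.isChain_cons_cons] at h
    have h1 : prev ≤ a := h.1
    have IH := ih a h.2
    obtain ⟨c, rfl⟩ : ∃ c, a = prev + c := ⟨a - prev, by omega⟩
    have e : winv (wordAux prev ((prev + c) :: rest)) =
        winv (wordAux (prev + c) rest) + c * rest.length := by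
      show winv ((false :: List.replicate (prev + c - prev) true) ++ wordAux (prev + c) rest) = _
      rw [List.cons_append]
      show winv (List.replicate (prev + c - prev) true ++ wordAux (prev + c) rest) +
        (if false then _ else 0) = _
      simp [winv_replicate_true_append, count_false_wordAux]
    rw [e, List.getLastD_cons, List.length_cons, List.sum_cons]
    nlinarith [IH]

lemma partitionWord_eq (l : List ℕ) (a : ℕ) (rest : List ℕ) (h : l.reverse = a :: rest) :
    partitionWord l = List.replicate (a - 1) true ++ wordAux a rest := by
  rw [partitionWord.eq_def, h]

/-- Key identity: n = |B(λ)| + 1 + inv(B(λ)). -/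
lemma sum_eq_key (l : List ℕ) (hl : IsPartition l) (hne : l ≠ []) :
    l.sum = (partitionWord l).length + 1 + winv (partitionWord l) := by
  obtain ⟨a, rest, hrev⟩ : ∃ a rest, l.reverse = a :: rest := by
    cases h : l.reverse with
    | nil => exact absurd (by simpa using congrArg List.reverse h) hne
    | cons a rest => exact ⟨a, rest, rfl⟩
  have hsorted : List.Pairwise (· ≤ ·) (a :: rest) := by
    rw [← hrev]; exact List.pairwise_reverse.2 hl.1
  have hchain : List.Chain (· ≤ ·) a rest := (List.isChain_iff_pairwise.2 hsorted : List.IsChain (· ≤ ·) (a :: rest))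
  have ha : 1 ≤ a := hl.2 a (by rw [← List.mem_reverse, hrev]; simp)
  have hsum : l.sum = a + rest.sum := by
    rw [← List.sum_reverse, hrev, List.sum_cons]
  rw [partitionWord_eq l a rest hrev, hsum]
  have f1 := winv_wordAux a rest hchain
  have f2 := count_true_wordAux a rest hchain
  have f3 := count_false_wordAux a rest
  have f4 := count_add_length (wordAux a rest)
  rw [winv_replicate_true_append, f3, List.length_append, List.length_replicate]
  obtain ⟨b, rfl⟩ : ∃ b, a = b + 1 := ⟨a - 1, by omega⟩
  simp only [Nat.add_sub_cancel]
  nlinarith [f1, f2, f3, f4]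

lemma forward (n : ℕ) (l : List ℕ) (hl : IsPartition l) (hsum : l.sum = n) (hn : 1 ≤ n)
    (hpal : partitionWord l = (partitionWord l).reverse) :
    ∃ x y : ℕ, x * y = 2 * (n + 1) ∧ 2 ≤ x ∧ x ≤ y ∧
      x + y = (partitionWord l).length + 4 := by
  have hne : l ≠ [] := by rintro rfl; simp at hsum; omega
  set w := partitionWord l with hw
  have hk := sum_eq_key l hl hne
  have hir : winv w.reverse = winv w := by rw [← hpal]
  have hr := winv_reverse w
  rw [hir] at hr
  have hml := count_add_length w
  set h := w.count true
  set z := w.count false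
  have key : (h + 2) * (z + 2) = 2 * (n + 1) := by nlinarith
  rcases le_total h z with hle | hle
  · exact ⟨h + 2, z + 2, key, by omega, by omega, by omega⟩
  · exact ⟨z + 2, h + 2, by rw [mul_comm]; exact key, by omega, by omega, by omega⟩

lemma wordAux_rep (a b k : ℕ) :
    wordAux a (List.replicate k a ++ [b]) =
      List.replicate (k + 1) false ++ List.replicate (b - a) true := by
  induction k with
  | zero => simp [wordAux]
  | succ k ih =>
    rw [List.replicate_succ, List.cons_append]
    show (false :: List.replicate (a - a) true) ++ wordAux a (List.replicate k a ++ [b]) = _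
    rw [ih, Nat.sub_self]
    simp [List.replicate_succ]

lemma word_construct (p z : ℕ) :
    partitionWord ((2 * p + 1) :: List.replicate z (p + 1)) =
      List.replicate p true ++ (List.replicate z false ++ List.replicate p true) := by
  cases z with
  | zero =>
    have : partitionWord [2 * p + 1] = List.replicate (2 * p) true := by
      rw [partitionWord_eq [2 * p + 1] (2 * p + 1) [] (by simp)]
      simp [wordAux]
    simp only [List.replicate_zero, List.nil_append, this]
    rw [← List.replicate_add]
    congr 1; omega
  | succ k =>
    have hrev : ((2 * p + 1) :: List.replicate (k + 1) (p + 1)).reverse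
        = (p + 1) :: (List.replicate k (p + 1) ++ [2 * p + 1]) := by
      rw [List.reverse_cons, List.reverse_replicate, List.replicate_succ, List.cons_append]
    rw [partitionWord_eq _ _ _ hrev, wordAux_rep]
    have e1 : p + 1 - 1 = p := by omega
    have e2 : 2 * p + 1 - (p + 1) = p := by omega
    rw [e1, e2]

lemma backward_core (p z n : ℕ) (h : (2 * p + 2) * (z + 2) = 2 * (n + 1)) :
    ∃ l : List ℕ, IsPartition l ∧ l.sum = n ∧
      partitionWord l = (partitionWord l).reverse ∧
      (partitionWord l).length = 2 * p + z := by
  refine ⟨(2 * p + 1) :: List.replicate z (p + 1), ⟨?_, ?_⟩, ?_, ?_, ?_⟩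
  · rw [List.pairwise_cons]
    constructor
    · intro b hb; rw [List.eq_of_mem_replicate hb]; omega
    · exact List.pairwise_replicate.2 (Or.inr le_rfl)
  · intro x hx
    rcases List.mem_cons.1 hx with rfl | hx
    · omega
    · rw [List.eq_of_mem_replicate hx]; omega
  · rw [List.sum_cons, List.sum_replicate, smul_eq_mul]
    nlinarith
  · rw [word_construct]
    simp [List.reverse_append, List.reverse_replicate, List.append_assoc]
  · rw [word_construct]
    simp [List.length_append, List.length_replicate]
    omega

lemma fac_inj (n : ℕ) : Set.InjOn (fun p : ℕ × ℕ => p.1 + p.2 - 4)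
    {p : ℕ × ℕ | p.1 * p.2 = 2 * (n + 1) ∧ 2 ≤ p.1 ∧ p.1 ≤ p.2} := by
  rintro ⟨x, y⟩ ⟨hxy, h2, hle⟩ ⟨x', y'⟩ ⟨hxy', h2', hle'⟩ hf
  simp only at hf hxy hxy' h2 hle h2' hle'
  have hs : x + y = x' + y' := by omega
  have hd : ((y : ℤ) - x) ^ 2 = ((y' : ℤ) - x') ^ 2 := by
    have c1 : ((y : ℤ) - x) ^ 2 = ((x : ℤ) + y) ^ 2 - 4 * ((x : ℤ) * y) := by ring
    have c2 : ((y' : ℤ) - x') ^ 2 = ((x' : ℤ) + y') ^ 2 - 4 * ((x' : ℤ) * y') := by ring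
    rw [c1, c2]
    have e1 : (x : ℤ) * y = 2 * (n + 1) := by exact_mod_cast hxy
    have e2 : (x' : ℤ) * y' = 2 * (n + 1) := by exact_mod_cast hxy'
    have e3 : ((x : ℤ) + y) = ((x' : ℤ) + y') := by exact_mod_cast hs
    rw [e1, e2, e3]
  have hdd : (y : ℤ) - x = (y' : ℤ) - x' := by
    have h0 : (0 : ℤ) ≤ (y : ℤ) - x := by push_cast; omega
    have h0' : (0 : ℤ) ≤ (y' : ℤ) - x' := by push_cast; omega
    nlinarith [hd, h0, h0']
  have : x = x' ∧ y = y' := by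
    constructor <;> (push_cast at hdd; omega)
  simp [Prod.ext_iff, this.1, this.2]


/-- `PL(n)`, the number of distinct lengths of `B(λ)` over the
palindrome partitions `λ` of `n`, equals the number of factorizations
`x * y = 2(n+1)` with `2 ≤ x ≤ y`. -/
theorem palindromePaper_stmt10 (n : ℕ) (hn : 1 ≤ n) :
    {m : ℕ | ∃ l : List ℕ, IsPartition l ∧ l.sum = n ∧
        partitionWord l = (partitionWord l).reverse ∧
        (partitionWord l).length = m}.ncard
      = {p : ℕ × ℕ | p.1 * p.2 = 2 * (n + 1) ∧ 2 ≤ p.1 ∧ p.1 ≤ p.2}.ncard := by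
  have himg : {m : ℕ | ∃ l : List ℕ, IsPartition l ∧ l.sum = n ∧
        partitionWord l = (partitionWord l).reverse ∧ (partitionWord l).length = m}
      = (fun p : ℕ × ℕ => p.1 + p.2 - 4) ''
        {p : ℕ × ℕ | p.1 * p.2 = 2 * (n + 1) ∧ 2 ≤ p.1 ∧ p.1 ≤ p.2} := by
    ext m
    constructor
    · rintro ⟨l, hl, hsum, hpal, hlen⟩
      obtain ⟨x, y, hxy, h2, hle, hsum4⟩ := forward n l hl hsum hn hpal
      exact ⟨(x, y), ⟨hxy, h2, hle⟩, by show x + y - 4 = m; omega⟩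
    · rintro ⟨⟨x, y⟩, ⟨hxy, h2, hle⟩, hf⟩
      simp only at hf hxy h2 hle
      have heven : Even x ∨ Even y := by
        rcases Nat.even_mul.1 ⟨n + 1, by rw [hxy]; ring⟩ with h | h
        · exact Or.inl h
        · exact Or.inr h
      rcases heven with ⟨c, rfl⟩ | ⟨c, rfl⟩
      · obtain ⟨l, h1, h2', h3, h4⟩ := backward_core (c - 1) (y - 2) n
          (by have : 2 * (c - 1) + 2 = c + c := by omega
              rw [this]
              have : y - 2 + 2 = y := by omega
              rw [this]; exact hxy)
        exact ⟨l, h1, h2', h3, by omega⟩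
      · obtain ⟨l, h1, h2', h3, h4⟩ := backward_core (c - 1) (x - 2) n
          (by have hc : 2 ≤ c + c := by omega
              have e1 : 2 * (c - 1) + 2 = c + c := by omega
              have e2 : x - 2 + 2 = x := by omega
              rw [e1, e2, mul_comm]; exact hxy)
        exact ⟨l, h1, h2', h3, by omega⟩
  rw [himg, Set.ncard_image_of_injOn (fac_inj n)]
end

section
/- For every integer n ≥ 1, R(n), the number of partitions λ of n such that the partition P(B(λ)^r) corresponding to the reversed word is also a partition of n, equals Σ N(2k, 2l), summed over all pairs of nonnegative integers (k, l) with 2kl + 2k + 2l + 1 = n, plus 2·Σ N(2k+1, 2l), summed over all pairs of nonnegative integers (k, l) with 2kl + 2k + 3l + 2 = n, where N(a, b) denotes the number of partitions of ab/2 having at most a parts with each part at most b. (By the middle-coefficient result for Gaussian binomials, N(2k, 2l) = T(2l, k).) -/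
namespace PalAux

/-- inversion count: pairs (true ... false) -/
def wInv : List Bool → ℕ
  | [] => 0
  | true :: t => t.count false + wInv t
  | false :: t => wInv t

/-- co-inversion count: pairs (false ... true) -/
def wCoinv : List Bool → ℕ
  | [] => 0
  | true :: t => wCoinv t
  | false :: t => t.count true + wCoinv t

lemma count_true_add_count_false (w : List Bool) :
    w.count true + w.count false = w.length := by
  induction w with
  | nil => simp
  | cons b t ih => cases b <;> simp [List.count_cons] <;> omega

lemma wInv_append_true (w : List Bool) : wInv (w ++ [true]) = wInv w := by
  induction w with
  | nil => simp [wInv]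
  | cons b t ih => cases b <;> simp [wInv, ih, List.count_append]

lemma wInv_append_false (w : List Bool) :
    wInv (w ++ [false]) = wInv w + w.count true := by
  induction w with
  | nil => simp [wInv]
  | cons b t ih =>
    cases b <;> simp [wInv, ih, List.count_append, List.count_cons] <;> omega

lemma wInv_reverse (w : List Bool) : wInv w.reverse = wCoinv w := by
  induction w with
  | nil => rfl
  | cons b t ih =>
    cases b <;>
      simp [wCoinv, List.reverse_cons, wInv_append_true, wInv_append_false, ih,
        List.count_reverse] <;> omega

lemma count_map_not_false (w : List Bool) : (w.map not).count false = w.count true := by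
  induction w with
  | nil => rfl
  | cons b t ih => cases b <;> simp [List.count_cons, ih]

lemma count_map_not_true (w : List Bool) : (w.map not).count true = w.count false := by
  induction w with
  | nil => rfl
  | cons b t ih => cases b <;> simp [List.count_cons, ih]

lemma wInv_map_not (w : List Bool) : wInv (w.map not) = wCoinv w := by
  induction w with
  | nil => rfl
  | cons b t ih => cases b <;> simp [wInv, wCoinv, ih, count_map_not_false, count_map_not_true]

lemma wCoinv_map_not (w : List Bool) : wCoinv (w.map not) = wInv w := by
  induction w with
  | nil => rfl
  | cons b t ih => cases b <;> simp [wInv, wCoinv, ih, count_map_not_false, count_map_not_true]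

lemma wInv_add_wCoinv (w : List Bool) :
    wInv w + wCoinv w = w.count true * w.count false := by
  induction w with
  | nil => rfl
  | cons b t ih =>
    cases b <;> simp [wInv, wCoinv, List.count_cons] <;>
      [rw [Nat.mul_succ]; rw [Nat.succ_mul]] <;> omega


def parse : ℕ → List Bool → List ℕ
  | c, [] => [c]
  | c, false :: t => c :: parse c t
  | c, true :: t => parse (c+1) t

lemma parse_ne_nil (w : List Bool) (c : ℕ) : parse c w ≠ [] := by
  induction w generalizing c with
  | nil => simp [parse]
  | cons b t ih => cases b <;> simp [parse, ih]

lemma parse_mem_ge (w : List Bool) (c : ℕ) : ∀ x ∈ parse c w, c ≤ x := by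
  induction w generalizing c with
  | nil => simp [parse]
  | cons b t ih =>
    cases b
    · intro x hx
      simp only [parse, List.mem_cons] at hx
      rcases hx with rfl | hx
      · exact le_refl x
      · exact ih c x hx
    · intro x hx
      simp only [parse] at hx
      exact (Nat.le_succ c).trans (ih (c+1) x hx)

lemma parse_sorted (w : List Bool) (c : ℕ) : (parse c w).Pairwise (· ≤ ·) := by
  induction w generalizing c with
  | nil => simp [parse]
  | cons b t ih =>
    cases b
    · exact List.pairwise_cons.2 ⟨fun x hx => parse_mem_ge t c x hx, ih c⟩
    · simpa [parse] using ih (c+1)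

lemma parse_sum (w : List Bool) (c : ℕ) :
    (parse c w).sum = c * (w.count false + 1) + w.count true + wInv w := by
  induction w generalizing c with
  | nil => simp [parse, wInv]
  | cons b t ih =>
    cases b
    · simp only [parse, List.sum_cons, ih c, wInv, List.count_cons]
      simp
      ring
    · simp only [parse, ih (c+1), wInv, List.count_cons]
      simp
      ring

lemma parse_replicate (k : ℕ) (c : ℕ) (w : List Bool) :
    parse c (List.replicate k true ++ w) = parse (c + k) w := by
  induction k generalizing c with
  | zero => simp
  | succ k ih =>
    rw [List.replicate_succ, List.cons_append]
    show parse (c+1) (List.replicate k true ++ w) = _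
    rw [ih]
    congr 1
    omega

lemma parse_wordAux (r : List ℕ) (c : ℕ) (hs : r.Pairwise (· ≤ ·)) (hmem : ∀ x ∈ r, c ≤ x) :
    parse c (wordAux c r) = c :: r := by
  induction r generalizing c with
  | nil => simp [wordAux, parse]
  | cons a r ih =>
    have hca : c ≤ a := hmem a (by simp)
    obtain ⟨h1, h2⟩ := List.pairwise_cons.1 hs
    rw [wordAux, List.cons_append]
    show c :: parse c (List.replicate (a - c) true ++ wordAux a r) = _
    rw [parse_replicate]
    have hc : c + (a - c) = a := by omega
    rw [hc, ih a h2 h1]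

lemma word_parse (w : List Bool) : ∀ (c a : ℕ) (r : List ℕ), parse c w = a :: r →
    List.replicate (a - c) true ++ wordAux a r = w := by
  induction w with
  | nil =>
    intro c a r h
    simp only [parse, List.cons.injEq] at h
    obtain ⟨rfl, rfl⟩ := h
    simp [wordAux]
  | cons b t ih =>
    intro c a r h
    cases b
    · rw [parse] at h
      injection h with h1 h2
      subst h1
      obtain ⟨a', r', hpr⟩ : ∃ a' r', parse c t = a' :: r' := by
        cases hp : parse c t with
        | nil => exact absurd hp (parse_ne_nil t c)
        | cons x xs => exact ⟨x, xs, rfl⟩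
      rw [← h2, hpr]
      have := ih c a' r' hpr
      simpa [wordAux] using this
    · rw [parse] at h
      have hca : c + 1 ≤ a := parse_mem_ge t (c+1) a (h ▸ (List.mem_cons_self : a ∈ a :: r))
      have := ih (c+1) a r h
      have hk : a - c = (a - (c+1)) + 1 := by omega
      rw [hk, List.replicate_succ, List.cons_append, this]

def fromWord (w : List Bool) : List ℕ := (parse 1 w).reverse

lemma fromWord_isPartition (w : List Bool) : IsPartition (fromWord w) := by
  constructor
  · exact (List.pairwise_reverse).2 (parse_sorted w 1)
  · intro x hx
    rw [fromWord, List.mem_reverse] at hx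
    exact parse_mem_ge w 1 x hx

lemma fromWord_ne_nil (w : List Bool) : fromWord w ≠ [] := by
  simp [fromWord, parse_ne_nil]

lemma fromWord_sum (w : List Bool) : (fromWord w).sum = w.length + wInv w + 1 := by
  rw [fromWord, List.sum_reverse, parse_sum, one_mul, ← count_true_add_count_false w]
  ring

lemma partitionWord_eq (l : List ℕ) (a : ℕ) (r : List ℕ) (h : l.reverse = a :: r) :
    partitionWord l = List.replicate (a - 1) true ++ wordAux a r := by
  unfold partitionWord
  rw [h]

lemma partitionWord_fromWord (w : List Bool) : partitionWord (fromWord w) = w := by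
  obtain ⟨a, r, h⟩ : ∃ a r, parse 1 w = a :: r := by
    cases hp : parse 1 w with
    | nil => exact absurd hp (parse_ne_nil w 1)
    | cons x xs => exact ⟨x, xs, rfl⟩
  have hrev : (fromWord w).reverse = a :: r := by
    rw [fromWord, List.reverse_reverse, h]
  rw [partitionWord_eq _ a r hrev]
  exact word_parse w 1 a r h

lemma fromWord_partitionWord (l : List ℕ) (hl : IsPartition l) (hne : l ≠ []) :
    fromWord (partitionWord l) = l := by
  obtain ⟨a, r, h⟩ : ∃ a r, l.reverse = a :: r := by
    cases hp : l.reverse with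
    | nil => exact absurd (by simpa using congrArg List.reverse hp) hne
    | cons x xs => exact ⟨x, xs, rfl⟩
  have hsorted : (a :: r).Pairwise (· ≤ ·) := by
    rw [← h]
    exact (List.pairwise_reverse).2 hl.1
  have h1a : 1 ≤ a := hl.2 a (by rw [← List.mem_reverse, h]; simp)
  obtain ⟨hh, ht⟩ := List.pairwise_cons.1 hsorted
  have key : parse 1 (partitionWord l) = a :: r := by
    rw [partitionWord_eq l a r h, parse_replicate]
    have : 1 + (a - 1) = a := by omega
    rw [this, parse_wordAux r a ht hh]
  rw [fromWord, key, ← h, List.reverse_reverse]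

lemma sum_eq_of_partition (l : List ℕ) (hl : IsPartition l) (hne : l ≠ []) :
    l.sum = (partitionWord l).length + wInv (partitionWord l) + 1 := by
  conv_lhs => rw [← fromWord_partitionWord l hl hne]
  exact fromWord_sum _



def parts : List Bool → List ℕ
  | [] => []
  | true :: t => t.count false :: parts t
  | false :: t => parts t

def unparts : ℕ → List ℕ → List Bool
  | b, [] => List.replicate b false
  | b, x :: r => List.replicate (b - x) false ++ true :: unparts x r

lemma parts_length (w : List Bool) : (parts w).length = w.count true := by
  induction w with
  | nil => rfl
  | cons b t ih => cases b <;> simp [parts, List.count_cons, ih]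

lemma parts_sum (w : List Bool) : (parts w).sum = wInv w := by
  induction w with
  | nil => rfl
  | cons b t ih => cases b <;> simp [parts, wInv, ih]

lemma parts_mem_le (w : List Bool) : ∀ x ∈ parts w, x ≤ w.count false := by
  induction w with
  | nil => simp [parts]
  | cons b t ih =>
    cases b
    · intro x hx
      simp only [parts] at hx
      have := ih x hx
      simp [List.count_cons]
      omega
    · intro x hx
      simp only [parts, List.mem_cons] at hx
      simp only [List.count_cons]
      rcases hx with rfl | hx
      · simp
      · have := ih x hx; omega

lemma parts_sorted (w : List Bool) : (parts w).Pairwise (· ≥ ·) := by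
  induction w with
  | nil => simp [parts]
  | cons b t ih =>
    cases b
    · simpa [parts] using ih
    · exact List.pairwise_cons.2 ⟨fun x hx => parts_mem_le t x hx, ih⟩

lemma unparts_count_true (b : ℕ) (r : List ℕ) : (unparts b r).count true = r.length := by
  induction r generalizing b with
  | nil => simp [unparts, List.count_replicate]
  | cons x r ih => simp [unparts, List.count_append, List.count_replicate, ih]

lemma unparts_count_false (b : ℕ) (r : List ℕ) (hs : r.Pairwise (· ≥ ·))
    (hb : ∀ x ∈ r, x ≤ b) : (unparts b r).count false = b := by
  induction r generalizing b with
  | nil => simp [unparts, List.count_replicate]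
  | cons x r ih =>
    obtain ⟨hh, ht⟩ := List.pairwise_cons.1 hs
    have hxb : x ≤ b := hb x (by simp)
    have := ih x ht hh
    simp [unparts, List.count_append, List.count_replicate, this]
    omega

lemma parts_replicate_false (k : ℕ) (u : List Bool) :
    parts (List.replicate k false ++ u) = parts u := by
  induction k with
  | zero => simp
  | succ k ih => rw [List.replicate_succ, List.cons_append]; simpa [parts] using ih

lemma parts_unparts (b : ℕ) (r : List ℕ) (hs : r.Pairwise (· ≥ ·))
    (hb : ∀ x ∈ r, x ≤ b) : parts (unparts b r) = r := by
  induction r generalizing b with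
  | nil =>
    show parts (List.replicate b false) = []
    simpa [parts] using parts_replicate_false b []
  | cons x r ih =>
    obtain ⟨hh, ht⟩ := List.pairwise_cons.1 hs
    show parts (List.replicate (b - x) false ++ true :: unparts x r) = x :: r
    rw [parts_replicate_false]
    simp only [parts]
    rw [unparts_count_false x r ht hh, ih x ht hh]

lemma unparts_succ (b : ℕ) (r : List ℕ) (hb : ∀ x ∈ r, x ≤ b) :
    unparts (b+1) r = false :: unparts b r := by
  cases r with
  | nil => simp [unparts, List.replicate_succ]
  | cons x r =>
    have hxb : x ≤ b := hb x (by simp)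
    have h : b + 1 - x = (b - x) + 1 := by omega
    simp [unparts, h, List.replicate_succ]

lemma unparts_parts (w : List Bool) : unparts (w.count false) (parts w) = w := by
  induction w with
  | nil => simp [unparts, parts]
  | cons b t ih =>
    cases b
    · have hcf : (false :: t).count false = t.count false + 1 := by simp [List.count_cons]
      rw [hcf]
      simp only [parts]
      rw [unparts_succ _ _ (parts_mem_le t), ih]
    · have hcf : (true :: t).count false = t.count false := by simp [List.count_cons]
      rw [hcf]
      simp only [parts, unparts]
      simp [ih]


def ASet (n : ℕ) : Set (List ℕ) :=
  {l : List ℕ | IsPartition l ∧ l.sum = n ∧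
    ∃ μ : List ℕ, IsPartition μ ∧ μ.sum = n ∧
      partitionWord μ = (partitionWord l).reverse}

def wordSet (n : ℕ) : Set (List Bool) :=
  {w | w.length + wInv w + 1 = n ∧ w.length + wInv w.reverse + 1 = n}

lemma partition_ne_nil {l : List ℕ} {n : ℕ} (hn : 1 ≤ n) (h : l.sum = n) : l ≠ [] := by
  rintro rfl
  simp at h
  omega

lemma image_ASet (n : ℕ) (hn : 1 ≤ n) : partitionWord '' ASet n = wordSet n := by
  ext w
  constructor
  · rintro ⟨l, ⟨hl, hsum, μ, hμ, hμsum, hμw⟩, rfl⟩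
    have hlne := partition_ne_nil hn hsum
    have hμne := partition_ne_nil hn hμsum
    have h1 := sum_eq_of_partition l hl hlne
    have h2 := sum_eq_of_partition μ hμ hμne
    rw [hμw, List.length_reverse] at h2
    exact ⟨by omega, by omega⟩
  · rintro ⟨h1, h2⟩
    refine ⟨fromWord w, ⟨fromWord_isPartition w, ?_, fromWord w.reverse,
      fromWord_isPartition _, ?_, ?_⟩, partitionWord_fromWord w⟩
    · rw [fromWord_sum]; exact h1
    · rw [fromWord_sum, List.length_reverse]; exact h2
    · rw [partitionWord_fromWord, partitionWord_fromWord]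

lemma RCount_eq_wordSet (n : ℕ) (hn : 1 ≤ n) : RCount n = (wordSet n).ncard := by
  have : RCount n = (ASet n).ncard := rfl
  rw [this, ← image_ASet n hn]
  refine (Set.ncard_image_of_injOn ?_).symm
  intro l1 h1 l2 h2 heq
  have e1 := fromWord_partitionWord l1 h1.1 (partition_ne_nil hn h1.2.1)
  have e2 := fromWord_partitionWord l2 h2.1 (partition_ne_nil hn h2.2.1)
  rw [← e1, ← e2, heq]

def WSet (a b : ℕ) : Set (List Bool) :=
  {w | w.count true = a ∧ w.count false = b ∧ wInv w = a * b / 2}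

def FIdx (n : ℕ) : Finset (ℕ × ℕ) :=
  (Finset.range n ×ˢ Finset.range n).filter
    (fun p => 2 ∣ p.1 * p.2 ∧ p.1 * p.2 / 2 + p.1 + p.2 + 1 = n)

lemma wordSet_eq_biUnion (n : ℕ) :
    wordSet n = ⋃ p ∈ FIdx n, WSet p.1 p.2 := by
  ext w
  simp only [Set.mem_iUnion, wordSet, Set.mem_setOf_eq, WSet, FIdx, Finset.mem_filter,
    Finset.mem_product, Finset.mem_range, exists_prop]
  have hrev := wInv_reverse w
  have hac := wInv_add_wCoinv w
  have hlen := count_true_add_count_false w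
  constructor
  · rintro ⟨h1, h2⟩
    have hinv : 2 * wInv w = w.count true * w.count false := by omega
    have hdiv2 : w.count true * w.count false / 2 = wInv w := by omega
    refine ⟨(w.count true, w.count false), ?_, rfl, rfl, ?_⟩ <;> dsimp only
    · exact ⟨⟨by omega, by omega⟩, ⟨wInv w, by omega⟩, by omega⟩
    · omega
  · rintro ⟨p, ⟨⟨_, _⟩, ⟨m, hm⟩, heq⟩, ha, hb, hi⟩
    rw [← ha, ← hb] at hm heq hi
    have hdiv : w.count true * w.count false / 2 = m := by omega
    rw [hdiv] at heq hi
    constructor <;> omega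

lemma ncard_biUnion_finset {α β : Type*} (F : Finset α) (f : α → Set β)
    (hfin : ∀ a ∈ F, (f a).Finite)
    (hdisj : ∀ a ∈ F, ∀ b ∈ F, a ≠ b → Disjoint (f a) (f b)) :
    (⋃ a ∈ F, f a).ncard = ∑ a ∈ F, (f a).ncard := by
  classical
  induction F using Finset.induction_on with
  | empty => simp
  | @insert x s hx ih =>
    rw [Finset.sum_insert hx, Finset.set_biUnion_insert]
    have hfinU : (⋃ a ∈ s, f a).Finite :=
      Set.Finite.biUnion s.finite_toSet (fun a ha => hfin a (Finset.mem_insert_of_mem ha))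
    have hdisjU : Disjoint (f x) (⋃ a ∈ s, f a) := by
      rw [Set.disjoint_iUnion_right]
      intro a
      rw [Set.disjoint_iUnion_right]
      intro ha
      exact hdisj x (Finset.mem_insert_self x s) a (Finset.mem_insert_of_mem ha)
        (fun h => hx (h ▸ ha))
    rw [Set.ncard_union_eq hdisjU (hfin x (Finset.mem_insert_self x s)) hfinU]
    rw [ih (fun a ha => hfin a (Finset.mem_insert_of_mem ha))
        (fun a ha b hb hab => hdisj a (Finset.mem_insert_of_mem ha) b
          (Finset.mem_insert_of_mem hb) hab)]

lemma wset_finite (a b : ℕ) : (WSet a b).Finite := by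
  apply (List.finite_length_eq Bool (a + b)).subset
  rintro w ⟨h1, h2, -⟩
  simp only [Set.mem_setOf_eq]
  rw [← count_true_add_count_false w, h1, h2]

lemma wset_disjoint {p q : ℕ × ℕ} (h : p ≠ q) : Disjoint (WSet p.1 p.2) (WSet q.1 q.2) := by
  rw [Set.disjoint_left]
  rintro w ⟨h1, h2, -⟩ ⟨h3, h4, -⟩
  apply h
  cases p; cases q
  simp_all

lemma RCount_eq_sum (n : ℕ) (hn : 1 ≤ n) :
    RCount n = ∑ p ∈ FIdx n, (WSet p.1 p.2).ncard := by
  rw [RCount_eq_wordSet n hn, wordSet_eq_biUnion n]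
  exact ncard_biUnion_finset (FIdx n) (fun p => WSet p.1 p.2)
    (fun p _ => wset_finite p.1 p.2) (fun p _ q _ hpq => wset_disjoint hpq)

lemma sum_range_getD (l : List ℕ) : ∑ i ∈ Finset.range l.length, l.getD i 0 = l.sum := by
  induction l with
  | nil => simp
  | cons x t ih =>
    rw [List.length_cons, Finset.sum_range_succ']
    simp only [List.getD_cons_succ, List.getD_cons_zero, ih, List.sum_cons]
    omega

lemma wset_ncard (a b : ℕ) : (WSet a b).ncard = NRect a b := by
  classical
  have himg : (fun (w : List Bool) (i : Fin a) => (parts w).getD i 0) '' WSet a b =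
      {μ : Fin a → ℕ | (∀ i j : Fin a, i ≤ j → μ j ≤ μ i) ∧
        (∀ i, μ i ≤ b) ∧ ∑ i, μ i = a * b / 2} := by
    ext μ
    constructor
    · rintro ⟨w, ⟨ha, hb, hi⟩, rfl⟩
      have hlen : (parts w).length = a := (parts_length w).trans ha
      refine ⟨?_, ?_, ?_⟩
      · intro i j hij
        rcases eq_or_lt_of_le hij with rfl | hlt
        · exact le_refl _
        · have hi' : (i : ℕ) < (parts w).length := by rw [hlen]; exact i.isLt
          have hj' : (j : ℕ) < (parts w).length := by rw [hlen]; exact j.isLt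
          simp only [List.getD_eq_getElem _ _ hi', List.getD_eq_getElem _ _ hj']
          exact (List.pairwise_iff_getElem.1 (parts_sorted w)) i j hi' hj'
            (by exact_mod_cast hlt)
      · intro i
        have hi' : (i : ℕ) < (parts w).length := by rw [hlen]; exact i.isLt
        simp only [List.getD_eq_getElem _ _ hi']
        rw [← hb]
        exact parts_mem_le w _ (List.getElem_mem hi')
      · show ∑ i : Fin a, (parts w).getD i 0 = a * b / 2
        have hsr : ∑ i ∈ Finset.range a, (parts w).getD i 0 = (parts w).sum := by
          rw [← hlen, sum_range_getD]
        rw [Fin.sum_univ_eq_sum_range (fun i => (parts w).getD i 0), hsr, parts_sum, hi]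
    · rintro ⟨hmono, hle, hsum⟩
      have hlenL : (List.ofFn μ).length = a := List.length_ofFn
      have hsortL : (List.ofFn μ).Pairwise (· ≥ ·) := by
        rw [List.pairwise_iff_getElem]
        intro i j hi hj hij
        rw [List.getElem_ofFn, List.getElem_ofFn]
        exact hmono _ _ (by simp only [Fin.mk_le_mk]; omega)
      have hmemL : ∀ x ∈ List.ofFn μ, x ≤ b := by
        intro x hx
        obtain ⟨i, rfl⟩ := List.mem_ofFn.1 hx
        exact hle i
      refine ⟨unparts b (List.ofFn μ), ⟨?_, ?_, ?_⟩, ?_⟩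
      · rw [unparts_count_true, hlenL]
      · exact unparts_count_false b _ hsortL hmemL
      · have hps := parts_sum (unparts b (List.ofFn μ))
        rw [parts_unparts b _ hsortL hmemL] at hps
        rw [← hps, List.sum_ofFn]
        exact hsum
      · funext i
        show (parts (unparts b (List.ofFn μ))).getD i 0 = μ i
        rw [parts_unparts b _ hsortL hmemL]
        have hi' : (i : ℕ) < (List.ofFn μ).length := by rw [hlenL]; exact i.isLt
        rw [List.getD_eq_getElem _ _ hi', List.getElem_ofFn]
  have hinj : Set.InjOn (fun (w : List Bool) (i : Fin a) => (parts w).getD i 0) (WSet a b) := by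
    rintro w1 ⟨ha1, hb1, -⟩ w2 ⟨ha2, hb2, -⟩ heq
    have hl1 : (parts w1).length = a := (parts_length w1).trans ha1
    have hl2 : (parts w2).length = a := (parts_length w2).trans ha2
    have hp : parts w1 = parts w2 := by
      apply List.ext_getElem (hl1.trans hl2.symm)
      intro i hi1 hi2
      have hfun := congrFun heq (⟨i, by omega⟩ : Fin a)
      rw [← List.getD_eq_getElem _ 0 hi1, ← List.getD_eq_getElem _ 0 hi2]
      simpa using hfun
    have hcgr := congrArg₂ unparts (hb1.trans hb2.symm) hp
    rwa [unparts_parts, unparts_parts] at hcgr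
  rw [NRect, ← himg, Set.ncard_image_of_injOn hinj]

def flipRev (w : List Bool) : List Bool := (w.map not).reverse

lemma flipRev_flipRev (w : List Bool) : flipRev (flipRev w) = w := by
  simp [flipRev, List.map_reverse, List.reverse_reverse, List.map_map, Function.comp_def,
    Bool.not_not]

lemma flipRev_mem {a b : ℕ} {w : List Bool} (h : w ∈ WSet a b) : flipRev w ∈ WSet b a := by
  obtain ⟨h1, h2, h3⟩ := h
  refine ⟨?_, ?_, ?_⟩
  · rw [flipRev, List.count_reverse, count_map_not_true, h2]
  · rw [flipRev, List.count_reverse, count_map_not_false, h1]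
  · rw [flipRev, wInv_reverse, wCoinv_map_not, h3, Nat.mul_comm]

lemma NRect_comm (a b : ℕ) : NRect a b = NRect b a := by
  rw [← wset_ncard, ← wset_ncard]
  have himg : flipRev '' WSet a b = WSet b a := by
    ext w
    constructor
    · rintro ⟨v, hv, rfl⟩
      exact flipRev_mem hv
    · intro hw
      exact ⟨flipRev w, flipRev_mem hw, flipRev_flipRev w⟩
  rw [← himg, Set.ncard_image_of_injOn]
  intro x _ y _ hxy
  have hc := congrArg flipRev hxy
  rwa [flipRev_flipRev, flipRev_flipRev] at hc

lemma mem_FIdx {n : ℕ} {p : ℕ × ℕ} : p ∈ FIdx n ↔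
    p.1 < n ∧ p.2 < n ∧ 2 ∣ p.1 * p.2 ∧ p.1 * p.2 / 2 + p.1 + p.2 + 1 = n := by
  simp [FIdx, Finset.mem_filter, Finset.mem_product, Finset.mem_range, and_assoc]

lemma odd_dvd {x y : ℕ} (h : 2 ∣ x * y) (hx : ¬ Even x) : ∃ l, y = 2 * l := by
  rcases Nat.even_or_odd y with he | ho
  · obtain ⟨l, hl⟩ := he
    exact ⟨l, by omega⟩
  · obtain ⟨k, hk⟩ := Nat.not_even_iff_odd.1 hx
    obtain ⟨l, hl⟩ := ho
    obtain ⟨m, hm⟩ := h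
    rw [hk, hl] at hm
    have hr : (2 * k + 1) * (2 * l + 1) = 2 * (2 * k * l + k + l) + 1 := by ring
    omega

lemma final_sum (n : ℕ) :
    ∑ p ∈ FIdx n, NRect p.1 p.2 =
      (∑ p ∈ (Finset.range n ×ˢ Finset.range n).filter
          (fun p => 2 * p.1 * p.2 + 2 * p.1 + 2 * p.2 + 1 = n),
        NRect (2 * p.1) (2 * p.2)) +
      2 * (∑ p ∈ (Finset.range n ×ˢ Finset.range n).filter
          (fun p => 2 * p.1 * p.2 + 2 * p.1 + 3 * p.2 + 2 = n),
        NRect (2 * p.1 + 1) (2 * p.2)) := by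
  classical
  have e1 : ∑ p ∈ (FIdx n).filter (fun p => Even p.1 ∧ Even p.2), NRect p.1 p.2 =
      ∑ p ∈ (Finset.range n ×ˢ Finset.range n).filter
        (fun p => 2 * p.1 * p.2 + 2 * p.1 + 2 * p.2 + 1 = n),
        NRect (2 * p.1) (2 * p.2) := by
    refine Finset.sum_nbij' (fun p => (p.1 / 2, p.2 / 2)) (fun q => (2 * q.1, 2 * q.2))
      ?_ ?_ ?_ ?_ ?_
    · rintro ⟨p1, p2⟩ hp
      simp only [Finset.mem_filter, Finset.mem_product, Finset.mem_range, mem_FIdx] at hp ⊢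
      obtain ⟨⟨h1, h2, hdvd, heq⟩, ⟨k, hk⟩, ⟨l, hl⟩⟩ := hp
      subst hk; subst hl
      have hk2 : (k + k) / 2 = k := by omega
      have hl2 : (l + l) / 2 = l := by omega
      rw [hk2, hl2]
      have hA : (k + k) * (l + l) = 2 * (2 * k * l) := by ring
      exact ⟨⟨by omega, by omega⟩, by omega⟩
    · rintro ⟨k, l⟩ hq
      simp only [Finset.mem_filter, Finset.mem_product, Finset.mem_range, mem_FIdx] at hq ⊢
      obtain ⟨⟨h1, h2⟩, heq⟩ := hq
      have hA : (2 * k) * (2 * l) = 2 * (2 * k * l) := by ring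
      exact ⟨⟨by omega, by omega, ⟨2 * k * l, by omega⟩, by omega⟩, ⟨k, by ring⟩, ⟨l, by ring⟩⟩
    · rintro ⟨p1, p2⟩ hp
      simp only [Finset.mem_filter, mem_FIdx] at hp
      obtain ⟨-, ⟨k, hk⟩, ⟨l, hl⟩⟩ := hp
      simp only [Prod.mk.injEq]
      omega
    · rintro ⟨k, l⟩ hq
      simp only [Prod.mk.injEq]
      omega
    · rintro ⟨p1, p2⟩ hp
      simp only [Finset.mem_filter, mem_FIdx] at hp
      obtain ⟨-, ⟨k, hk⟩, ⟨l, hl⟩⟩ := hp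
      show NRect p1 p2 = NRect (2 * (p1 / 2)) (2 * (p2 / 2))
      congr 1 <;> omega
  have e2 : ∑ p ∈ ((FIdx n).filter (fun p => ¬(Even p.1 ∧ Even p.2))).filter
        (fun p => Even p.1), NRect p.1 p.2 =
      ∑ p ∈ (Finset.range n ×ˢ Finset.range n).filter
        (fun p => 2 * p.1 * p.2 + 2 * p.1 + 3 * p.2 + 2 = n),
        NRect (2 * p.1 + 1) (2 * p.2) := by
    refine Finset.sum_nbij' (fun p => ((p.2 - 1) / 2, p.1 / 2))
      (fun q => (2 * q.2, 2 * q.1 + 1)) ?_ ?_ ?_ ?_ ?_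
    · rintro ⟨p1, p2⟩ hp
      simp only [Finset.mem_filter, Finset.mem_product, Finset.mem_range, mem_FIdx] at hp ⊢
      obtain ⟨⟨⟨h1, h2, hdvd, heq⟩, hnP⟩, hE1⟩ := hp
      obtain ⟨k, hk⟩ := hE1
      have hnE2 : ¬ Even p2 := fun h => hnP ⟨⟨k, hk⟩, h⟩
      obtain ⟨l, hl⟩ := Nat.not_even_iff_odd.1 hnE2
      subst hk; subst hl
      have hq1 : (2 * l + 1 - 1) / 2 = l := by omega
      have hq2 : (k + k) / 2 = k := by omega
      rw [hq1, hq2]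
      have hA : (k + k) * (2 * l + 1) = 2 * (2 * l * k) + 2 * k := by ring
      exact ⟨⟨by omega, by omega⟩, by omega⟩
    · rintro ⟨l, k⟩ hq
      simp only [Finset.mem_filter, Finset.mem_product, Finset.mem_range, mem_FIdx] at hq ⊢
      obtain ⟨⟨h1, h2⟩, heq⟩ := hq
      have hA : (2 * k) * (2 * l + 1) = 2 * (2 * l * k) + 2 * k := by ring
      refine ⟨⟨⟨by omega, by omega, ⟨k * (2 * l + 1), by ring⟩, by omega⟩, ?_⟩, ⟨k, by ring⟩⟩
      rintro ⟨-, ⟨r, hr⟩⟩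
      omega
    · rintro ⟨p1, p2⟩ hp
      simp only [Finset.mem_filter, mem_FIdx] at hp
      obtain ⟨⟨⟨h1, h2, hdvd, heq⟩, hnP⟩, ⟨k, hk⟩⟩ := hp
      have hnE2 : ¬ Even p2 := fun h => hnP ⟨⟨k, hk⟩, h⟩
      obtain ⟨l, hl⟩ := Nat.not_even_iff_odd.1 hnE2
      simp only [Prod.mk.injEq]
      omega
    · rintro ⟨l, k⟩ hq
      simp only [Prod.mk.injEq]
      omega
    · rintro ⟨p1, p2⟩ hp
      simp only [Finset.mem_filter, mem_FIdx] at hp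
      obtain ⟨⟨⟨h1, h2, hdvd, heq⟩, hnP⟩, ⟨k, hk⟩⟩ := hp
      have hnE2 : ¬ Even p2 := fun h => hnP ⟨⟨k, hk⟩, h⟩
      obtain ⟨l, hl⟩ := Nat.not_even_iff_odd.1 hnE2
      show NRect p1 p2 = NRect (2 * ((p2 - 1) / 2) + 1) (2 * (p1 / 2))
      rw [NRect_comm]
      congr 1 <;> omega
  have e3 : ∑ p ∈ ((FIdx n).filter (fun p => ¬(Even p.1 ∧ Even p.2))).filter
        (fun p => ¬ Even p.1), NRect p.1 p.2 =
      ∑ p ∈ (Finset.range n ×ˢ Finset.range n).filter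
        (fun p => 2 * p.1 * p.2 + 2 * p.1 + 3 * p.2 + 2 = n),
        NRect (2 * p.1 + 1) (2 * p.2) := by
    refine Finset.sum_nbij' (fun p => ((p.1 - 1) / 2, p.2 / 2))
      (fun q => (2 * q.1 + 1, 2 * q.2)) ?_ ?_ ?_ ?_ ?_
    · rintro ⟨p1, p2⟩ hp
      simp only [Finset.mem_filter, Finset.mem_product, Finset.mem_range, mem_FIdx] at hp ⊢
      obtain ⟨⟨⟨h1, h2, hdvd, heq⟩, hnP⟩, hnE1⟩ := hp
      obtain ⟨l, hl⟩ := odd_dvd hdvd hnE1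
      obtain ⟨k, hk⟩ := Nat.not_even_iff_odd.1 hnE1
      subst hk; subst hl
      have hq1 : (2 * k + 1 - 1) / 2 = k := by omega
      have hq2 : (2 * l) / 2 = l := by omega
      rw [hq1, hq2]
      have hA : (2 * k + 1) * (2 * l) = 2 * (2 * k * l) + 2 * l := by ring
      exact ⟨⟨by omega, by omega⟩, by omega⟩
    · rintro ⟨k, l⟩ hq
      simp only [Finset.mem_filter, Finset.mem_product, Finset.mem_range, mem_FIdx] at hq ⊢
      obtain ⟨⟨h1, h2⟩, heq⟩ := hq
      have hA : (2 * k + 1) * (2 * l) = 2 * (2 * k * l) + 2 * l := by ring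
      refine ⟨⟨⟨by omega, by omega, ⟨(2 * k + 1) * l, by ring⟩, by omega⟩, ?_⟩, ?_⟩
      · rintro ⟨⟨r, hr⟩, -⟩
        omega
      · rintro ⟨r, hr⟩
        omega
    · rintro ⟨p1, p2⟩ hp
      simp only [Finset.mem_filter, mem_FIdx] at hp
      obtain ⟨⟨⟨h1, h2, hdvd, heq⟩, hnP⟩, hnE1⟩ := hp
      obtain ⟨l, hl⟩ := odd_dvd hdvd hnE1
      obtain ⟨k, hk⟩ := Nat.not_even_iff_odd.1 hnE1
      simp only [Prod.mk.injEq]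
      omega
    · rintro ⟨k, l⟩ hq
      simp only [Prod.mk.injEq]
      omega
    · rintro ⟨p1, p2⟩ hp
      simp only [Finset.mem_filter, mem_FIdx] at hp
      obtain ⟨⟨⟨h1, h2, hdvd, heq⟩, hnP⟩, hnE1⟩ := hp
      obtain ⟨l, hl⟩ := odd_dvd hdvd hnE1
      obtain ⟨k, hk⟩ := Nat.not_even_iff_odd.1 hnE1
      show NRect p1 p2 = NRect (2 * ((p1 - 1) / 2) + 1) (2 * (p2 / 2))
      congr 1 <;> omega
  rw [← Finset.sum_filter_add_sum_filter_not (FIdx n) (fun p => Even p.1 ∧ Even p.2)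
      (fun p => NRect p.1 p.2)]
  rw [← Finset.sum_filter_add_sum_filter_not
      ((FIdx n).filter (fun p => ¬(Even p.1 ∧ Even p.2))) (fun p => Even p.1)
      (fun p => NRect p.1 p.2)]
  rw [e1, e2, e3]
  ring

end PalAux

/-- coefficient form of the generating function for `R(n)`:
`R(n) = Σ_{2kl+2k+2l+1=n} N(2k,2l) + 2 Σ_{2kl+2k+3l+2=n} N(2k+1,2l)`, where
`N(a,b)` counts partitions of `a*b/2` inside an `a × b` rectangle. -/
theorem palindromePaper_stmt14 (n : ℕ) (hn : 1 ≤ n) :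
    RCount n =
      (∑ p ∈ (Finset.range n ×ˢ Finset.range n).filter
          (fun p => 2 * p.1 * p.2 + 2 * p.1 + 2 * p.2 + 1 = n),
        NRect (2 * p.1) (2 * p.2)) +
      2 * (∑ p ∈ (Finset.range n ×ˢ Finset.range n).filter
          (fun p => 2 * p.1 * p.2 + 2 * p.1 + 3 * p.2 + 2 = n),
        NRect (2 * p.1 + 1) (2 * p.2)) := by
  classical
  rw [PalAux.RCount_eq_sum n hn]
  rw [Finset.sum_congr rfl fun p _ => PalAux.wset_ncard p.1 p.2]
  exact PalAux.final_sum n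
end

section
/- For every integer n ≥ 2, R(n) = 2 if and only if n = 3 or n + 1 is prime. -/
namespace PalAux

def inv : List Bool → ℕ
  | [] => 0
  | b :: t => (if b then t.count false else 0) + inv t

lemma inv_append (u v : List Bool) :
    inv (u ++ v) = inv u + inv v + u.count true * v.count false := by
  induction u with
  | nil => simp [inv]
  | cons b t ih =>
    cases b <;> simp [inv, ih, List.count_append, List.count_cons] <;> ring

lemma inv_replicate_true (k : ℕ) : inv (List.replicate k true) = 0 := by
  induction k with
  | zero => rfl
  | succ n ih => simp [List.replicate_succ, inv, ih, List.count_replicate]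

lemma inv_add_inv_reverse (w : List Bool) :
    inv w + inv w.reverse = w.count true * w.count false := by
  induction w with
  | nil => simp [inv]
  | cons b t ih =>
    rw [List.reverse_cons, inv_append]
    cases b <;>
      simp [inv, List.count_reverse, List.count_cons] <;> ring_nf at ih ⊢ <;> omega

lemma count_false_wordAux (prev : ℕ) (L : List ℕ) :
    (wordAux prev L).count false = L.length := by
  induction L generalizing prev with
  | nil => rfl
  | cons a rest ih =>
    simp [wordAux, List.count_append, List.count_cons, List.count_replicate, ih]

lemma sum_wordAux (prev : ℕ) (L : List ℕ) (h : List.Chain (· ≤ ·) prev L) :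
    L.sum = inv (wordAux prev L) + prev * L.length + (wordAux prev L).count true := by
  induction L generalizing prev with
  | nil => simp [wordAux, inv]
  | cons a rest ih =>
    rw [List.Chain, List.chain_cons] at h
    obtain ⟨hpa, hchain⟩ := h
    have := ih a hchain
    rw [wordAux, inv_append, List.count_append]
    simp only [inv, List.count_cons, List.count_replicate, count_false_wordAux,
      List.count_nil, inv_replicate_true]
    simp only [List.sum_cons, List.length_cons]
    simp
    have key : (a - prev) * rest.length + prev * rest.length = a * rest.length := by
      rw [← Nat.add_mul]; congr 1; omega
    have key2 : prev * (rest.length + 1) = prev * rest.length + prev := by ring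
    omega

lemma ones_zero_wordAux (prev : ℕ) (L : List ℕ) (h : List.Chain (· ≤ ·) prev L)
    (h0 : (wordAux prev L).count true = 0) : L = List.replicate L.length prev := by
  induction L generalizing prev with
  | nil => rfl
  | cons a rest ih =>
    rw [List.Chain, List.chain_cons] at h
    rw [wordAux, List.count_append] at h0
    simp at h0
    have ha : a = prev := by omega
    subst ha
    have := ih a h.2 (by omega)
    simp [List.replicate_succ]
    exact this


lemma word_struct (l : List ℕ) (hl : IsPartition l) (hne : l ≠ []) :
    ∃ a rest, l.reverse = a :: rest ∧ 1 ≤ a ∧ List.Chain (· ≤ ·) a rest ∧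
      partitionWord l = List.replicate (a-1) true ++ wordAux a rest := by
  obtain ⟨hs, hp⟩ := hl
  have hrev : l.reverse ≠ [] := by simpa using hne
  obtain ⟨a, rest, h⟩ := List.exists_cons_of_ne_nil hrev
  refine ⟨a, rest, h, ?_, ?_, ?_⟩
  · exact hp a (by rw [← List.mem_reverse, h]; exact List.mem_cons_self)
  · have hpw : List.Pairwise (· ≤ ·) l.reverse := by
      rw [List.pairwise_reverse]
      exact hs
    have hch : List.Chain' (· ≤ ·) l.reverse := List.isChain_iff_pairwise.mpr hpw
    rw [h] at hch
    exact hch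
  · simp [partitionWord, h]

lemma sum_eq_F (l : List ℕ) (hl : IsPartition l) (hne : l ≠ []) :
    l.sum = inv (partitionWord l) + (partitionWord l).count true
      + (partitionWord l).count false + 1 := by
  obtain ⟨a, rest, hrev, ha, hchain, hword⟩ := word_struct l hl hne
  have hsum : l.sum = a + rest.sum := by
    rw [← List.sum_reverse, hrev]; simp
  rw [hword, inv_append, List.count_append, List.count_append]
  simp only [inv_replicate_true, List.count_replicate, count_false_wordAux]
  have hs := sum_wordAux a rest hchain
  have key : (a-1) * rest.length + rest.length = a * rest.length := by
    rw [← Nat.succ_mul]; congr 1; omega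
  simp
  omega

lemma eq_single (l : List ℕ) (hl : IsPartition l) (hne : l ≠ [])
    (h0 : (partitionWord l).count false = 0) : l = [l.sum] := by
  obtain ⟨a, rest, hrev, ha, hchain, hword⟩ := word_struct l hl hne
  rw [hword, List.count_append] at h0
  simp only [List.count_replicate] at h0
  simp only [count_false_wordAux] at h0
  simp at h0
  subst h0
  have : l = [a] := by
    rw [← List.reverse_reverse l, hrev]; rfl
  rw [this]; simp

lemma eq_ones (l : List ℕ) (hl : IsPartition l) (hne : l ≠ [])
    (h0 : (partitionWord l).count true = 0) : l = List.replicate l.sum 1 := by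
  obtain ⟨a, rest, hrev, ha, hchain, hword⟩ := word_struct l hl hne
  rw [hword, List.count_append] at h0
  simp at h0
  obtain ⟨h01, h02⟩ := h0
  have ha1 : a = 1 := by omega
  subst ha1
  have hrest := ones_zero_wordAux 1 rest hchain h02
  have hlrev : l.reverse = List.replicate (rest.length + 1) 1 := by
    rw [hrev, List.replicate_succ, ← hrest]
  have hl2 : l = List.replicate (rest.length + 1) 1 := by
    rw [← List.reverse_reverse l, hlrev, List.reverse_replicate]
  have hsum : l.sum = rest.length + 1 := by
    rw [hl2]; simp [List.sum_replicate]
  rw [hsum, hl2]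

lemma wordAux_rep (a k : ℕ) : wordAux a (List.replicate k a) = List.replicate k false := by
  induction k with
  | zero => rfl
  | succ n ih => simp [List.replicate_succ, wordAux, ih, Nat.sub_self]

lemma wordAux_rep_app (a b k : ℕ) :
    wordAux a (List.replicate k a ++ [b]) =
      List.replicate k false ++ (false :: List.replicate (b-a) true) := by
  induction k with
  | zero => simp [wordAux]
  | succ n ih => simp [List.replicate_succ, wordAux, ih, Nat.sub_self]

lemma word_single (n : ℕ) : partitionWord [n] = List.replicate (n-1) true := by
  have : ([n] : List ℕ).reverse = n :: [] := by simp
  simp [partitionWord, this, wordAux]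

lemma word_ones (n : ℕ) (hn : 1 ≤ n) :
    partitionWord (List.replicate n 1) = List.replicate (n-1) false := by
  obtain ⟨m, rfl⟩ : ∃ m, n = m + 1 := ⟨n - 1, by omega⟩
  have hrev : (List.replicate (m+1) (1:ℕ)).reverse = 1 :: List.replicate m 1 := by
    simp [List.reverse_replicate, List.replicate_succ]
    rw [← List.replicate_succ', ← List.replicate_succ]
  simp [partitionWord, hrev, wordAux_rep]

lemma word_family (a q : ℕ) (ha : 2 ≤ a) (hq : 1 ≤ q) :
    partitionWord ((2*a-1) :: List.replicate q a) =
      List.replicate (a-1) true ++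
        (List.replicate (q-1) false ++ (false :: List.replicate (a-1) true)) := by
  obtain ⟨m, rfl⟩ : ∃ m, q = m + 1 := ⟨q - 1, by omega⟩
  have hrev : ((2*a-1) :: List.replicate (m+1) a).reverse
      = a :: (List.replicate m a ++ [2*a-1]) := by
    simp only [List.reverse_cons, List.reverse_replicate]
    rw [List.replicate_succ]
    simp
  have h2 : 2*a - 1 - a = a - 1 := by omega
  simp [partitionWord, hrev, wordAux_rep_app, h2]

lemma family_palindrome (a q : ℕ) (ha : 2 ≤ a) (hq : 1 ≤ q) :
    partitionWord ((2*a-1) :: List.replicate q a) =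
      (partitionWord ((2*a-1) :: List.replicate q a)).reverse := by
  rw [word_family a q ha hq]
  simp [List.reverse_append, List.reverse_replicate]
  rw [List.append_cons, ← List.replicate_succ', ← List.cons_append, ← List.replicate_succ]

lemma family_partition (a q : ℕ) (ha : 2 ≤ a) (hq : 1 ≤ q) :
    IsPartition ((2*a-1) :: List.replicate q a) := by
  constructor
  · rw [List.pairwise_cons]
    constructor
    · intro b hb
      rw [List.eq_of_mem_replicate hb]
      omega
    · exact List.pairwise_replicate.mpr (Or.inr (le_refl a))
  · intro x hx
    rcases List.mem_cons.mp hx with h | h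
    · omega
    · rw [List.eq_of_mem_replicate h]; omega

lemma family_sum (a q : ℕ) : ((2*a-1) :: List.replicate q a).sum = 2*a-1 + q*a := by
  simp [List.sum_replicate, mul_comm]

-- numeric lemma 1
lemma numeric1 (p q n : ℕ) (hn : 2 ≤ n) (hfac : (p+2)*(q+2) = 2*(n+1))
    (hc : n = 3 ∨ Nat.Prime (n+1)) : p = 0 ∨ q = 0 := by
  rcases hc with rfl | hp
  · have h2 : (p+2)*2 ≤ (p+2)*(q+2) := Nat.mul_le_mul_left _ (by omega)
    have hp6 : p ≤ 2 := by nlinarith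
    interval_cases p <;> omega
  · have hdvd : (n+1) ∣ (p+2)*(q+2) := ⟨2, by omega⟩
    rcases (Nat.Prime.dvd_mul hp).mp hdvd with h | h
    · obtain ⟨k, hk⟩ := h
      have hpos : 0 < n + 1 := by omega
      have hcan : (n+1) * (k * (q+2)) = (n+1) * 2 := by
        rw [← mul_assoc, ← hk]; linarith [hfac]
      have hkq := Nat.eq_of_mul_eq_mul_left hpos hcan
      have hq2 : (q+2) ∣ 2 := ⟨k, by rw [mul_comm]; exact hkq.symm⟩
      have := Nat.le_of_dvd (by norm_num) hq2
      omega
    · obtain ⟨k, hk⟩ := h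
      have hpos : 0 < n + 1 := by omega
      have hcan : (n+1) * (k * (p+2)) = (n+1) * 2 := by
        rw [hk] at hfac; ring_nf at hfac ⊢; linarith [hfac]
      have hkq := Nat.eq_of_mul_eq_mul_left hpos hcan
      have hp2 : (p+2) ∣ 2 := ⟨k, by rw [mul_comm]; exact hkq.symm⟩
      have := Nat.le_of_dvd (by norm_num) hp2
      omega

-- numeric lemma 2
lemma numeric2 (n : ℕ) (hn : 2 ≤ n) (h3 : n ≠ 3) (hnp : ¬ Nat.Prime (n+1)) :
    ∃ a q, 2 ≤ a ∧ 1 ≤ q ∧ 2*a-1 + q*a = n := by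
  set m := n + 1 with hm
  have hm2 : 2 ≤ m := by omega
  rcases Nat.even_or_odd m with he | ho
  · obtain ⟨c, hc⟩ := he
    refine ⟨2, c - 2, by omega, by omega, by omega⟩
  · obtain ⟨d, hd, hd2, hdm⟩ := Nat.exists_dvd_of_not_prime2 hm2 hnp
    have hdodd : ¬ (2 ∣ d) := by
      intro h2d
      have : (2:ℕ) ∣ m := h2d.trans hd
      rw [Nat.odd_iff] at ho
      omega
    have hd3 : 3 ≤ d := by omega
    obtain ⟨b, hb⟩ := hd
    have hbodd : ¬ (2 ∣ b) := by
      intro h2b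
      have : (2:ℕ) ∣ m := hb ▸ h2b.mul_left d
      rw [Nat.odd_iff] at ho
      omega
    have hb2 : 2 ≤ b := by
      rcases Nat.lt_or_ge b 2 with h | h
      · interval_cases b <;> omega
      · exact h
    have hb3 : 3 ≤ b := by omega
    refine ⟨d, b - 2, by omega, by omega, ?_⟩
    have : (b-2)*d + 2*d = b * d := by
      rw [← Nat.add_mul]; congr 1; omega
    have hbd : b * d = m := by rw [hb]; ring
    omega

lemma inv_def_nil : inv [] = 0 := rfl

lemma mem_pal (n : ℕ) (l : List ℕ) (h1 : IsPartition l) (h2 : l.sum = n)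
    (h3 : partitionWord l = (partitionWord l).reverse) :
    l ∈ {l : List ℕ | IsPartition l ∧ l.sum = n ∧
      ∃ μ : List ℕ, IsPartition μ ∧ μ.sum = n ∧
        partitionWord μ = (partitionWord l).reverse} :=
  ⟨h1, h2, l, h1, h2, h3⟩

lemma single_mem (n : ℕ) (hn : 2 ≤ n) :
    ([n] : List ℕ) ∈ {l : List ℕ | IsPartition l ∧ l.sum = n ∧
      ∃ μ : List ℕ, IsPartition μ ∧ μ.sum = n ∧
        partitionWord μ = (partitionWord l).reverse} := by
  apply mem_pal
  · exact ⟨List.pairwise_singleton _ n, by intro x hx; simp at hx; omega⟩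
  · simp
  · rw [word_single]; simp [List.reverse_replicate]

lemma ones_mem (n : ℕ) (hn : 2 ≤ n) :
    (List.replicate n 1 : List ℕ) ∈ {l : List ℕ | IsPartition l ∧ l.sum = n ∧
      ∃ μ : List ℕ, IsPartition μ ∧ μ.sum = n ∧
        partitionWord μ = (partitionWord l).reverse} := by
  apply mem_pal
  · constructor
    · exact List.pairwise_replicate.mpr (Or.inr (le_refl 1))
    · intro x hx; rw [List.eq_of_mem_replicate hx]; omega
  · simp
  · rw [word_ones n (by omega)]; simp [List.reverse_replicate]

lemma family_mem (n a q : ℕ) (ha : 2 ≤ a) (hq : 1 ≤ q) (hsum : 2*a-1 + q*a = n) :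
    ((2*a-1) :: List.replicate q a : List ℕ) ∈ {l : List ℕ | IsPartition l ∧ l.sum = n ∧
      ∃ μ : List ℕ, IsPartition μ ∧ μ.sum = n ∧
        partitionWord μ = (partitionWord l).reverse} := by
  apply mem_pal
  · exact family_partition a q ha hq
  · rw [family_sum]; exact hsum
  · exact family_palindrome a q ha hq

lemma key_factor (n : ℕ) (hn : 2 ≤ n) (l : List ℕ)
    (hmem : l ∈ {l : List ℕ | IsPartition l ∧ l.sum = n ∧
      ∃ μ : List ℕ, IsPartition μ ∧ μ.sum = n ∧
        partitionWord μ = (partitionWord l).reverse}) :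
    ((partitionWord l).count true + 2) * ((partitionWord l).count false + 2) = 2*(n+1) := by
  obtain ⟨hl, hsum, μ, hμ, hμsum, hμw⟩ := hmem
  have hlne : l ≠ [] := by rintro rfl; simp at hsum; omega
  have hμne : μ ≠ [] := by rintro rfl; simp at hμsum; omega
  have h1 := sum_eq_F l hl hlne
  have h2 := sum_eq_F μ hμ hμne
  rw [hμw, List.count_reverse, List.count_reverse] at h2
  have hinv := inv_add_inv_reverse (partitionWord l)
  set p := (partitionWord l).count true
  set q := (partitionWord l).count false
  have hexp : (p+2)*(q+2) = p*q + 2*p + 2*q + 4 := by ring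
  omega

lemma set_eq_two (n : ℕ) (hn : 2 ≤ n) (hc : n = 3 ∨ Nat.Prime (n+1)) :
    {l : List ℕ | IsPartition l ∧ l.sum = n ∧
      ∃ μ : List ℕ, IsPartition μ ∧ μ.sum = n ∧
        partitionWord μ = (partitionWord l).reverse}
      = {[n], List.replicate n 1} := by
  apply Set.eq_of_subset_of_subset
  · intro l hmem
    have hfac := key_factor n hn l hmem
    obtain ⟨hl, hsum, -⟩ := hmem
    have hlne : l ≠ [] := by rintro rfl; simp at hsum; omega
    rcases numeric1 _ _ n hn hfac hc with hp | hq
    · right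
      have := eq_ones l hl hlne hp
      rw [hsum] at this
      exact this
    · left
      have := eq_single l hl hlne hq
      rw [hsum] at this
      exact this
  · intro l hmem
    rcases hmem with rfl | rfl
    · exact single_mem n hn
    · exact ones_mem n hn

theorem main (n : ℕ) (hn : 2 ≤ n) :
    RCount n = 2 ↔ n = 3 ∨ Nat.Prime (n + 1) := by
  constructor
  · intro hR
    by_contra hcon
    push_neg at hcon
    obtain ⟨h3, hnp⟩ := hcon
    obtain ⟨a, q, ha, hq, hsum⟩ := numeric2 n hn h3 hnp
    unfold RCount at hR
    obtain ⟨u, v, huv, hS⟩ := Set.ncard_eq_two.mp hR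
    have hx := single_mem n hn
    have hy := ones_mem n hn
    have hz := family_mem n a q ha hq hsum
    rw [hS] at hx hy hz
    have hxy : ([n] : List ℕ) ≠ List.replicate n 1 := by
      intro h
      have := congrArg List.length h
      simp at this
      omega
    have hzx : ((2*a-1) :: List.replicate q a : List ℕ) ≠ [n] := by
      intro h
      have := congrArg List.length h
      simp at this
      omega
    have hzy : ((2*a-1) :: List.replicate q a : List ℕ) ≠ List.replicate n 1 := by
      intro h
      have hmem : (2*a-1) ∈ List.replicate n 1 := by
        rw [← h]; exact List.mem_cons_self
      have := List.eq_of_mem_replicate hmem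
      omega
    simp only [Set.mem_insert_iff, Set.mem_singleton_iff] at hx hy hz
    rcases hx with hx | hx <;> rcases hy with hy | hy <;> rcases hz with hz | hz <;>
      first
        | exact huv (hx ▸ hy ▸ rfl)
        | exact hxy (hx.trans hy.symm)
        | exact hzx (hz.trans hx.symm)
        | exact hzy (hz.trans hy.symm)
  · intro hc
    unfold RCount
    rw [set_eq_two n hn hc]
    apply Set.ncard_pair
    intro h
    have := congrArg List.length h
    simp at this
    omega


end PalAux

/-- for `n ≥ 2`, `R(n) = 2` iff `n = 3` or `n + 1` is prime. -/


theorem palindromePaper_stmt15 (n : ℕ) (hn : 2 ≤ n) :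
    RCount n = 2 ↔ n = 3 ∨ Nat.Prime (n + 1) := by
  exact PalAux.main n hn
end
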